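/- Let μ = μ_1 ⊗ ⋯ ⊗ μ_d be a product probability measure on ℝ^d (so the coordinates X_1,…,X_d are independent). Let R^1,…,R^R with R^r = ∏_{i=1}^d I^{(i),r} be measurable rectangles (each I^{(i),r} a measurable subset of ℝ) satisfying μ(R^r ∩ R^{r'}) = 0 for r ≠ r' and μ(R^1 ∪ ⋯ ∪ R^R) = 1. For each r, let A^r ⊂ ℕ^d be finite and Ψ^r_α(x) = ∏_{i=1}^d φ^{(i),r}_{α_i}(x_i) with univariate measurable functions satisfying φ^{(i),r}_0 ≡ 1 on I^{(i),r} and ∫_{I^{(i),r}} φ^{(i),r}_a φ^{(i),r}_b dμ_i = δ_{ab} · μ_i(I^{(i),r}) for all relevant a, b. Let G(x) = Σ_{r=1}^R 1_{R^r}(x) Σ_{α∈A^r} y^r_α Ψ^r_α(x), with y^r_0 = 0 if 0 ∉ A^r. For A ⊆ {1,…,d}, let 𝔉_A be the σ-algebra generated by the coordinates (x_i)_{i∈A}, and define J^{(i),r,r'}_{a,a'} = ∫_{I^{(i),r} ∩ I^{(i),r'}} φ^{(i),r}_a φ^{(i),r'}_{a'} dμ_i. Then Var_μ(E[G | 𝔉_A])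 = Σ_{r,r'=1}^R ( Σ_{α∈A^r, α'∈A^{r'}; α_i = α'_i = 0 for all i ∉ A} y^r_α y^{r'}_{α'} ∏_{i∈A} J^{(i),r,r'}_{α_i,α'_i} ) · (∏_{i∉A} μ_i(I^{(i),r})) · (∏_{i∉A} μ_i(I^{(i),r'})) − (Σ_{r=1}^R y^r_0 μ(R^r))². -/

import Mathlib

open MeasureTheory ProbabilityTheory

/-- The σ-algebra on `ℝ^d` generated by the coordinate maps `x ↦ x i`, `i ∈ S`. -/
def coordSigma (d : ℕ) (S : Finset (Fin d)) : MeasurableSpace (Fin d → ℝ) :=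
  ⨆ i ∈ S, MeasurableSpace.comap (fun x : Fin d → ℝ => x i) inferInstance

def auxE {ι : Type*} (_i : ι) : Type := ℝ

theorem aux_pi_integrable {ι : Type*} [Fintype ι] (ν : ι → Measure ℝ)
    [∀ i, SigmaFinite (ν i)] {f : ι → ℝ → ℝ} (hf : ∀ i, Integrable (f i) (ν i)) :
    Integrable (fun x : ι → ℝ => ∏ i, f i (x i)) (Measure.pi ν) := by
  letI : ∀ i : ι, MeasurableSpace (auxE i) := fun _ => inferInstanceAs (MeasurableSpace ℝ)
  letI : ∀ i : ι, MeasureSpace (auxE i) := fun i => @MeasureSpace.mk _ _ (ν i)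
  haveI : ∀ i : ι, SigmaFinite (volume : Measure (auxE i)) := fun i => inferInstanceAs (SigmaFinite (ν i))
  exact MeasureTheory.Integrable.fintype_prod_dep (E := auxE) (f := f) hf

theorem aux_pi_integral {ι : Type*} [Fintype ι] (ν : ι → Measure ℝ)
    [∀ i, SigmaFinite (ν i)] (f : ι → ℝ → ℝ) :
    ∫ x : ι → ℝ, ∏ i, f i (x i) ∂Measure.pi ν = ∏ i, ∫ t, f i t ∂ν i := by
  letI : ∀ i : ι, MeasurableSpace (auxE i) := fun _ => inferInstanceAs (MeasurableSpace ℝ)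
  letI : ∀ i : ι, MeasureSpace (auxE i) := fun i => @MeasureSpace.mk _ _ (ν i)
  haveI : ∀ i : ι, SigmaFinite (volume : Measure (auxE i)) := fun i => inferInstanceAs (SigmaFinite (ν i))
  exact MeasureTheory.integral_fintype_prod_eq_prod (𝕜 := ℝ) (E := auxE) f

theorem aux_mul_integrable {α : Type*} {m : MeasurableSpace α} {μ : Measure α}
    [IsFiniteMeasure μ] {f g : α → ℝ} (hf : MemLp f 2 μ) (hg : MemLp g 2 μ) :
    Integrable (fun x => f x * g x) μ := by
  have h : MemLp (f • g) 1 μ := hg.smul (φ := f) hf (r := 1)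
  exact (h.integrable le_rfl).congr (Filter.Eventually.of_forall fun x => by simp [smul_eq_mul])

theorem aux_variance_congr {Ω : Type*} {m : MeasurableSpace Ω} {μ : Measure Ω} {f g : Ω → ℝ}
    (h : f =ᵐ[μ] g) : variance f μ = variance g μ := by
  unfold ProbabilityTheory.variance ProbabilityTheory.evariance
  have hi : μ[f] = μ[g] := integral_congr_ae h
  rw [hi]
  congr 1
  apply lintegral_congr_ae
  filter_upwards [h] with ω hω
  rw [hω]


theorem aux_condexp (d : ℕ) (ν : Fin d → Measure ℝ) [∀ i, IsProbabilityMeasure (ν i)]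
    (S : Finset (Fin d)) (G H : (Fin d → ℝ) → ℝ)
    (hGint : Integrable G (Measure.pi ν)) (hHint : Integrable H (Measure.pi ν))
    (hHmeas : Measurable[coordSigma d S] H)
    (hGH : ∀ (z : {i // i ∈ S} → ℝ) (w : {i // ¬ i ∈ S} → ℝ),
      (∫ w', G ((MeasurableEquiv.piEquivPiSubtypeProd (fun _ : Fin d => ℝ) (· ∈ S)).symm (z, w'))
          ∂Measure.pi (fun j : {i // ¬ i ∈ S} => ν ↑j))
        = H ((MeasurableEquiv.piEquivPiSubtypeProd (fun _ : Fin d => ℝ) (· ∈ S)).symm (z, w))) :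
    H =ᵐ[Measure.pi ν] (Measure.pi ν)[G | coordSigma d S] := by
  classical
  set μ := Measure.pi ν with hμ
  have hm : coordSigma d S ≤ (inferInstance : MeasurableSpace (Fin d → ℝ)) := by
    refine iSup₂_le fun i _ => ?_
    exact (measurable_pi_apply i).comap_le
  haveI : SigmaFinite (μ.trim hm) := by infer_instance
  set T : (Fin d → ℝ) → ({i // i ∈ S} → ℝ) := fun x j => x ↑j with hT
  have hmeq : coordSigma d S = MeasurableSpace.comap T inferInstance := by
    have h1 : (inferInstance : MeasurableSpace ({i // i ∈ S} → ℝ))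
        = ⨆ j : {i // i ∈ S},
            MeasurableSpace.comap (fun g : {i // i ∈ S} → ℝ => g j) inferInstance := rfl
    rw [h1, MeasurableSpace.comap_iSup]
    rw [coordSigma, iSup_subtype']
    simp_rw [MeasurableSpace.comap_comp]
    rfl
  set e := MeasurableEquiv.piEquivPiSubtypeProd (fun _ : Fin d => ℝ) (· ∈ S) with he
  set μS := Measure.pi (fun j : {i // i ∈ S} => ν ↑j) with hμS
  set μSc := Measure.pi (fun j : {i // ¬ i ∈ S} => ν ↑j) with hμSc
  have hmp : MeasurePreserving e μ (μS.prod μSc) := by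
    rw [hμ, hμS, hμSc, he]
    have hfin : (Finset.Subtype.fintype S) = (Subtype.fintype fun x => x ∈ S) :=
      Subsingleton.elim _ _
    rw [hfin]
    exact measurePreserving_piEquivPiSubtypeProd (fun i => ν i) (· ∈ S)
  have hTes : ∀ z w, T (e.symm (z, w)) = z := by
    intro z w; funext j
    show (e.symm (z, w)) ↑j = z j
    have h2 : e.symm (z, w) ↑j = if h : (↑j ∈ S) then z ⟨↑j, h⟩ else w ⟨↑j, h⟩ := rfl
    rw [h2, dif_pos j.2]
  have hpre : ∀ B : Set ({i // i ∈ S} → ℝ), e.symm ⁻¹' (T ⁻¹' B) = B ×ˢ Set.univ := by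
    intro B; ext p
    obtain ⟨z, w⟩ := p
    simp [Set.mem_preimage, hTes z w]
  have key : ∀ (F : (Fin d → ℝ) → ℝ), Integrable F μ → ∀ B : Set ({i // i ∈ S} → ℝ),
      ∫ x in T ⁻¹' B, F x ∂μ = ∫ z in B, (∫ w, F (e.symm (z, w)) ∂μSc) ∂μS := by
    intro F hF B
    have h1 := (MeasurePreserving.symm e hmp).setIntegral_preimage_emb e.symm.measurableEmbedding F (T ⁻¹' B)
    rw [← h1, hpre B]
    have hint : IntegrableOn (fun p : ({i // i ∈ S} → ℝ) × ({i // ¬ i ∈ S} → ℝ) => F (e.symm p))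
        (B ×ˢ Set.univ) (μS.prod μSc) :=
      Integrable.integrableOn (((MeasurePreserving.symm e hmp).integrable_comp_emb e.symm.measurableEmbedding).mpr hF)
    rw [setIntegral_prod _ hint]
    simp
  refine ae_eq_condExp_of_forall_setIntegral_eq hm hGint (fun s _ _ => hHint.integrableOn) ?_ ?_
  · intro s hs _
    rw [hmeq] at hs
    obtain ⟨B, hB, rfl⟩ := MeasurableSpace.measurableSet_comap.mp hs
    rw [key G hGint B, key H hHint B]
    congr 1
    funext z
    have hHconst : (fun w => H (e.symm (z, w))) = fun _ => ∫ w', G (e.symm (z, w')) ∂μSc :=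
      funext fun w => (hGH z w).symm
    rw [hHconst, integral_const]
    haveI : IsProbabilityMeasure μSc := by rw [hμSc]; infer_instance
    simp
  · exact ⟨H, hHmeas.stronglyMeasurable, Filter.EventuallyEq.rfl⟩

theorem prod_univ_congr {ι M : Type*} [CommMonoid M] {F1 F2 : Fintype ι} {f g : ι → M}
    (h : ∀ i, f i = g i) :
    @Finset.prod ι M _ (@Finset.univ ι F1) f = @Finset.prod ι M _ (@Finset.univ ι F2) g := by
  cases Subsingleton.elim F1 F2
  exact Finset.prod_congr rfl fun i _ => h i

noncomputable def tpH {d R : ℕ} (ν : Fin d → Measure ℝ) (I : Fin R → Fin d → Set ℝ)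
    (𝒜 : Fin R → Finset (Fin d → ℕ)) (φ : Fin R → Fin d → ℕ → ℝ → ℝ)
    (y : Fin R → (Fin d → ℕ) → ℝ) (S : Finset (Fin d)) (x : Fin d → ℝ) : ℝ :=
  ∑ r, ∑ α ∈ (𝒜 r).filter (fun α => ∀ i ∉ S, α i = 0),
    y r α * (∏ i ∈ S, (I r i).indicator (φ r i (α i)) (x i))
      * ∏ i ∈ Sᶜ, (ν i (I r i)).toReal

/-- Analytical Sobol' formula for the Tree-PCE metamodel. Under the
product probability measure `μ = μ₁ ⊗ ⋯ ⊗ μ_d`, the rectangles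
`𝓡 r = ∏ i, I r i` partition the space up to null sets; the local bases are
tensorized, `Ψ r α (x) = ∏ i, φ r i (α i) (x i)`, with `φ r i 0 ≡ 1` on `I r i` and
`∫_{I r i} φ r i a · φ r i b dμ_i = δ_{ab} μ_i(I r i)`. With
`G = Σ_r 1_{𝓡 r} Σ_{α ∈ 𝒜 r} y r α · Ψ r α`, `y r 0 = 0` when `0 ∉ 𝒜 r`, and
coupling terms `J i r r' a a' = ∫_{I r i ∩ I r' i} φ r i a · φ r' i a' dμ_i`, we have
`Var(E[G | 𝔉_S]) = Σ_{r,r'} (Σ_{α,α'; αᵢ = α'ᵢ = 0 ∀ i ∉ S} y r α · y r' α' ∏_{i ∈ S} J i r r' (α i) (α' i))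
  · ∏_{i ∉ S} μ_i(I r i) · ∏_{i ∉ S} μ_i(I r' i) − (Σ_r y r 0 · μ(𝓡 r))²`. -/
theorem tree_pce_sobol_formula
    (d R : ℕ)
    (ν : Fin d → Measure ℝ) [∀ i, IsProbabilityMeasure (ν i)]
    (I : Fin R → Fin d → Set ℝ) (hImeas : ∀ r i, MeasurableSet (I r i))
    (hdisj : ∀ r r', r ≠ r' →
      Measure.pi ν (Set.univ.pi (I r) ∩ Set.univ.pi (I r')) = 0)
    (hcover : Measure.pi ν (⋃ r, Set.univ.pi (I r)) = 1)
    (𝒜 : Fin R → Finset (Fin d → ℕ))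
    (φ : Fin R → Fin d → ℕ → ℝ → ℝ)
    (hφmeas : ∀ r i a, Measurable (φ r i a))
    (hφ0 : ∀ r i, ∀ t ∈ I r i, φ r i 0 t = 1)
    (hφorth : ∀ r i a b,
      ∫ t in I r i, φ r i a t * φ r i b t ∂(ν i)
        = (if a = b then 1 else 0) * (ν i (I r i)).toReal)
    (y : Fin R → (Fin d → ℕ) → ℝ)
    (hy0 : ∀ r, 0 ∉ 𝒜 r → y r 0 = 0)
    (G : (Fin d → ℝ) → ℝ)
    (hG : ∀ x, G x = ∑ r, Set.indicator (Set.univ.pi (I r))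
      (fun x' => ∑ α ∈ 𝒜 r, y r α * ∏ i, φ r i (α i) (x' i)) x)
    (J : Fin d → Fin R → Fin R → ℕ → ℕ → ℝ)
    (hJ : ∀ i r r' a a',
      J i r r' a a' = ∫ t in I r i ∩ I r' i, φ r i a t * φ r' i a' t ∂(ν i))
    (S : Finset (Fin d)) :
    variance ((Measure.pi ν)[G | coordSigma d S]) (Measure.pi ν)
      = (∑ r, ∑ r',
          (∑ α ∈ (𝒜 r).filter (fun α => ∀ i ∉ S, α i = 0),
            ∑ α' ∈ (𝒜 r').filter (fun α' => ∀ i ∉ S, α' i = 0),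
              y r α * y r' α' * ∏ i ∈ S, J i r r' (α i) (α' i))
          * (∏ i ∈ Sᶜ, (ν i (I r i)).toReal)
          * (∏ i ∈ Sᶜ, (ν i (I r' i)).toReal))
        - (∑ r, y r 0 * (Measure.pi ν (Set.univ.pi (I r))).toReal) ^ 2 := by
  -- basic measurability of the localized basis functions
  have hψmeas : ∀ (r : Fin R) (a : ℕ) (i : Fin d),
      Measurable ((I r i).indicator (φ r i a)) :=
    fun r a i => (hφmeas r i a).indicator (hImeas r i)
  -- product of two indicators
  have hψJint : ∀ (r r' : Fin R) (a a' : ℕ) (i : Fin d),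
      ∫ t, (I r i).indicator (φ r i a) t * (I r' i).indicator (φ r' i a') t ∂ν i
        = ∫ t in I r i ∩ I r' i, φ r i a t * φ r' i a' t ∂ν i := by
    intro r r' a a' i
    have h2 : (fun t => (I r i).indicator (φ r i a) t * (I r' i).indicator (φ r' i a') t)
        = (I r i ∩ I r' i).indicator (fun t => φ r i a t * φ r' i a' t) :=
      funext fun t => (Set.inter_indicator_mul _ _ t).symm
    rw [h2, integral_indicator ((hImeas r i).inter (hImeas r' i))]
  -- square integrability
  have hψL2 : ∀ (r : Fin R) (a : ℕ) (i : Fin d),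
      MemLp ((I r i).indicator (φ r i a)) 2 (ν i) := by
    intro r a i
    rw [memLp_two_iff_integrable_sq (hψmeas r a i).aestronglyMeasurable]
    have h1 : (fun t => ((I r i).indicator (φ r i a) t) ^ 2)
        = (I r i).indicator (fun t => φ r i a t ^ 2) :=
      funext fun t => by
        by_cases h : t ∈ I r i <;> simp [Set.indicator_of_mem, Set.indicator_of_notMem, h]
    rw [h1, integrable_indicator_iff (hImeas r i)]
    by_contra hni
    have h0 : ∫ t in I r i, φ r i a t ^ 2 ∂ν i = 0 := integral_undef hni
    have h2 := hφorth r i a a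
    rw [if_pos rfl, one_mul] at h2
    have h3 : (fun t => φ r i a t * φ r i a t) = fun t => φ r i a t ^ 2 :=
      funext fun t => (sq _).symm
    rw [h3, h0] at h2
    have h4 : ν i (I r i) = 0 := by
      rcases (ENNReal.toReal_eq_zero_iff _).mp h2.symm with h | h
      · exact h
      · exact absurd h (measure_ne_top _ _)
    apply hni
    rw [IntegrableOn, Measure.restrict_eq_zero.mpr h4]
    exact integrable_zero_measure
  have hψint : ∀ (r : Fin R) (a : ℕ) (i : Fin d),
      Integrable ((I r i).indicator (φ r i a)) (ν i) :=
    fun r a i => (hψL2 r a i).integrable one_le_two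
  have hψmulint : ∀ (r r' : Fin R) (a a' : ℕ) (i : Fin d),
      Integrable (fun t => (I r i).indicator (φ r i a) t
        * (I r' i).indicator (φ r' i a') t) (ν i) :=
    fun r r' a a' i => aux_mul_integrable (hψL2 r a i) (hψL2 r' a' i)
  -- first moments
  have hψ1 : ∀ (r : Fin R) (a : ℕ) (i : Fin d),
      ∫ t, (I r i).indicator (φ r i a) t ∂ν i
        = if a = 0 then (ν i (I r i)).toReal else 0 := by
    intro r a i
    rw [integral_indicator (hImeas r i)]
    have h1 : ∫ t in I r i, φ r i a t ∂ν i = ∫ t in I r i, φ r i a t * φ r i 0 t ∂ν i :=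
      setIntegral_congr_fun (hImeas r i) (fun t ht => by rw [hφ0 r i t ht, mul_one])
    rw [h1, hφorth r i a 0]
    by_cases h : a = 0 <;> simp [h]
  have hψJ : ∀ (r r' : Fin R) (a a' : ℕ) (i : Fin d),
      ∫ t, (I r i).indicator (φ r i a) t * (I r' i).indicator (φ r' i a') t ∂ν i
        = J i r r' a a' := by
    intro r r' a a' i
    rw [hψJint, hJ]
  -- tensorized form of G
  have hGdef : G = fun x => ∑ r, ∑ α ∈ 𝒜 r,
      y r α * ∏ i, (I r i).indicator (φ r i (α i)) (x i) := by
    funext x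
    rw [hG x]
    refine Finset.sum_congr rfl fun r _ => ?_
    by_cases hx : x ∈ Set.univ.pi (I r)
    · rw [Set.indicator_of_mem hx]
      refine Finset.sum_congr rfl fun α _ => ?_
      congr 1
      refine Finset.prod_congr rfl fun i _ => ?_
      rw [Set.indicator_of_mem (hx i trivial)]
    · rw [Set.indicator_of_notMem hx]
      obtain ⟨i, hxi⟩ : ∃ i, x i ∉ I r i := by
        by_contra hc
        push_neg at hc
        exact hx fun i _ => hc i
      refine (Finset.sum_eq_zero fun α _ => ?_).symm
      rw [Finset.prod_eq_zero (Finset.mem_univ i) (Set.indicator_of_notMem hxi _), mul_zero]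
  -- integrability of G
  have hGint : Integrable G (Measure.pi ν) := by
    rw [hGdef]
    refine integrable_finset_sum _ fun r _ => integrable_finset_sum _ fun α _ => ?_
    exact (aux_pi_integrable ν (fun i => hψint r (α i) i)).const_mul (y r α)
  -- integrability and integral of products over S
  have hprodS_int : ∀ (g : Fin d → ℝ → ℝ), (∀ i, Integrable (g i) (ν i)) →
      Integrable (fun x : Fin d → ℝ => ∏ i ∈ S, g i (x i)) (Measure.pi ν) := by
    intro g hg
    have h1 : Integrable (fun x : Fin d → ℝ =>
        ∏ i, (if i ∈ S then g i else fun _ => (1:ℝ)) (x i)) (Measure.pi ν) := by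
      refine aux_pi_integrable ν fun i => ?_
      by_cases h : i ∈ S
      · simpa [h] using hg i
      · simpa [h] using (integrable_const (1:ℝ) : Integrable (fun _ : ℝ => (1:ℝ)) (ν i))
    refine h1.congr (Filter.Eventually.of_forall fun x => ?_)
    calc ∏ i, (if i ∈ S then g i else fun _ => (1:ℝ)) (x i)
        = ∏ i, (if i ∈ S then g i (x i) else 1) :=
          Finset.prod_congr rfl fun i _ => by by_cases h : i ∈ S <;> simp [h]
      _ = ∏ i ∈ Finset.univ ∩ S, g i (x i) := Finset.prod_ite_mem _ _ _
      _ = ∏ i ∈ S, g i (x i) := by rw [Finset.univ_inter]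
  have hprodS_val : ∀ (g : Fin d → ℝ → ℝ),
      ∫ x, ∏ i ∈ S, g i (x i) ∂Measure.pi ν = ∏ i ∈ S, ∫ t, g i t ∂ν i := by
    intro g
    have h0 : ∀ x : Fin d → ℝ, ∏ i ∈ S, g i (x i)
        = ∏ i, (if i ∈ S then g i else fun _ => (1:ℝ)) (x i) := by
      intro x
      rw [show ∏ i, (if i ∈ S then g i else fun _ => (1:ℝ)) (x i)
            = ∏ i, (if i ∈ S then g i (x i) else 1) from
          Finset.prod_congr rfl fun i _ => by by_cases h : i ∈ S <;> simp [h],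
        Finset.prod_ite_mem, Finset.univ_inter]
    simp_rw [h0]
    rw [aux_pi_integral]
    calc ∏ i, ∫ t, (if i ∈ S then g i else fun _ => (1:ℝ)) t ∂ν i
        = ∏ i, (if i ∈ S then ∫ t, g i t ∂ν i else 1) := by
          refine Finset.prod_congr rfl fun i _ => ?_
          by_cases h : i ∈ S <;> simp [h]
      _ = ∏ i ∈ S, ∫ t, g i t ∂ν i := by rw [Finset.prod_ite_mem, Finset.univ_inter]
  -- measurability of tpH
  have hmle : coordSigma d S ≤ (inferInstance : MeasurableSpace (Fin d → ℝ)) :=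
    iSup₂_le fun i _ => (measurable_pi_apply i).comap_le
  have hcoordS : ∀ i ∈ S, Measurable[coordSigma d S] fun x : Fin d → ℝ => x i := by
    intro i hi
    have h1 : Measurable[MeasurableSpace.comap (fun x : Fin d → ℝ => x i) inferInstance]
        (fun x : Fin d → ℝ => x i) := Measurable.of_comap_le le_rfl
    have h2 : MeasurableSpace.comap (fun x : Fin d → ℝ => x i) inferInstance
        ≤ coordSigma d S := by
      unfold coordSigma
      exact le_biSup (f := fun i : Fin d => MeasurableSpace.comap (fun x : Fin d → ℝ => x i) inferInstance) hi
    exact h1.mono h2 le_rfl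
  have hHmeasS : Measurable[coordSigma d S] (tpH ν I 𝒜 φ y S) := by
    unfold tpH
    refine Finset.measurable_sum _ fun r _ => Finset.measurable_sum _ fun α _ => ?_
    refine Measurable.mul_const ?_ _
    refine Measurable.const_mul ?_ _
    exact Finset.measurable_prod _ fun i hi => ((hψmeas r (α i) i).comp (hcoordS i hi))
  have hHint : Integrable (tpH ν I 𝒜 φ y S) (Measure.pi ν) := by
    unfold tpH
    refine integrable_finset_sum _ fun r _ => integrable_finset_sum _ fun α _ => ?_
    exact ((hprodS_int _ (fun i => hψint r (α i) i)).const_mul (y r α)).mul_const _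
  have hHterm_val : ∀ (r : Fin R) (α : Fin d → ℕ),
      ∫ x, ∏ i ∈ S, (I r i).indicator (φ r i (α i)) (x i) ∂Measure.pi ν
        = ∏ i ∈ S, (if α i = 0 then (ν i (I r i)).toReal else 0) := by
    intro r α
    rw [hprodS_val]
    exact Finset.prod_congr rfl fun i _ => hψ1 r (α i) i
  have hHpair_int : ∀ (r r' : Fin R) (α α' : Fin d → ℕ),
      Integrable (fun x => (∏ i ∈ S, (I r i).indicator (φ r i (α i)) (x i))
        * ∏ i ∈ S, (I r' i).indicator (φ r' i (α' i)) (x i)) (Measure.pi ν) := by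
    intro r r' α α'
    have h1 := hprodS_int (fun i t => (I r i).indicator (φ r i (α i)) t
        * (I r' i).indicator (φ r' i (α' i)) t) (fun i => hψmulint r r' (α i) (α' i) i)
    refine h1.congr (Filter.Eventually.of_forall fun x => ?_)
    exact Finset.prod_mul_distrib
  have hHpair_val : ∀ (r r' : Fin R) (α α' : Fin d → ℕ),
      ∫ x, (∏ i ∈ S, (I r i).indicator (φ r i (α i)) (x i))
        * ∏ i ∈ S, (I r' i).indicator (φ r' i (α' i)) (x i) ∂Measure.pi ν
        = ∏ i ∈ S, J i r r' (α i) (α' i) := by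
    intro r r' α α'
    have h0 : ∀ x : Fin d → ℝ, (∏ i ∈ S, (I r i).indicator (φ r i (α i)) (x i))
        * ∏ i ∈ S, (I r' i).indicator (φ r' i (α' i)) (x i)
        = ∏ i ∈ S, ((I r i).indicator (φ r i (α i)) (x i)
            * (I r' i).indicator (φ r' i (α' i)) (x i)) :=
      fun x => (Finset.prod_mul_distrib).symm
    simp_rw [h0]
    rw [hprodS_val (fun i t => (I r i).indicator (φ r i (α i)) t
      * (I r' i).indicator (φ r' i (α' i)) t)]
    exact Finset.prod_congr rfl fun i _ => hψJ r r' (α i) (α' i) i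
  -- identify the conditional expectation
  have hae : tpH ν I 𝒜 φ y S =ᵐ[Measure.pi ν] (Measure.pi ν)[G | coordSigma d S] := by
    refine aux_condexp d ν S G (tpH ν I 𝒜 φ y S) hGint hHint hHmeasS ?_
    intro z w
    set e := MeasurableEquiv.piEquivPiSubtypeProd (fun _ : Fin d => ℝ) (· ∈ S) with he
    have hzc : ∀ (z : {i // i ∈ S} → ℝ) (w : {i // ¬ i ∈ S} → ℝ) (j : {i // i ∈ S}),
        (e.symm (z, w)) ↑j = z j := by
      intro z w j
      have h2 : e.symm (z, w) ↑j = if h : (↑j ∈ S) then z ⟨↑j, h⟩ else w ⟨↑j, h⟩ := rfl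
      rw [h2, dif_pos j.2]
    have hwc : ∀ (z : {i // i ∈ S} → ℝ) (w : {i // ¬ i ∈ S} → ℝ) (j : {i // ¬ i ∈ S}),
        (e.symm (z, w)) ↑j = w j := by
      intro z w j
      have h2 : e.symm (z, w) ↑j = if h : (↑j ∈ S) then z ⟨↑j, h⟩ else w ⟨↑j, h⟩ := rfl
      rw [h2, dif_neg j.2]
    have hHval : tpH ν I 𝒜 φ y S (e.symm (z, w))
        = ∑ r, ∑ α ∈ (𝒜 r).filter (fun α => ∀ i ∉ S, α i = 0),
            y r α * (∏ j : {i // i ∈ S}, (I r ↑j).indicator (φ r ↑j (α ↑j)) (z j))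
              * ∏ i ∈ Sᶜ, (ν i (I r i)).toReal := by
      unfold tpH
      refine Finset.sum_congr rfl fun r _ => Finset.sum_congr rfl fun α _ => ?_
      congr 1
      congr 1
      refine ((Finset.prod_coe_sort S
        (fun i => (I r i).indicator (φ r i (α i)) ((e.symm (z, w)) i))).symm).trans ?_
      exact prod_univ_congr fun j => by rw [hzc z w j]
    rw [hHval]
    have hGsplit : ∀ w' : {i // ¬ i ∈ S} → ℝ, G (e.symm (z, w'))
        = ∑ r, ∑ α ∈ 𝒜 r,
            (y r α * ∏ j : {i // i ∈ S}, (I r ↑j).indicator (φ r ↑j (α ↑j)) (z j))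
              * ∏ j : {i // ¬ i ∈ S}, (I r ↑j).indicator (φ r ↑j (α ↑j)) (w' j) := by
      intro w'
      rw [hGdef]
      refine Finset.sum_congr rfl fun r _ => Finset.sum_congr rfl fun α _ => ?_
      rw [mul_assoc]
      congr 1
      rw [← Fintype.prod_subtype_mul_prod_subtype (· ∈ S)
        (fun i => (I r i).indicator (φ r i (α i)) ((e.symm (z, w')) i))]
      refine congrArg₂ (· * ·) ?_ ?_
      · exact prod_univ_congr fun j => by rw [hzc z w' j]
      · exact prod_univ_congr fun j => by rw [hwc z w' j]
    simp_rw [hGsplit]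
    have hint1 : ∀ (r : Fin R) (α : Fin d → ℕ),
        Integrable (fun w' : {i // ¬ i ∈ S} → ℝ =>
          (y r α * ∏ j : {i // i ∈ S}, (I r ↑j).indicator (φ r ↑j (α ↑j)) (z j))
            * ∏ j : {i // ¬ i ∈ S}, (I r ↑j).indicator (φ r ↑j (α ↑j)) (w' j))
          (Measure.pi fun j : {i // ¬ i ∈ S} => ν ↑j) := by
      intro r α
      refine Integrable.const_mul ?_ _
      exact aux_pi_integrable (fun j : {i // ¬ i ∈ S} => ν ↑j) (fun j => hψint r (α ↑j) ↑j)
    rw [integral_finset_sum _ fun r _ => integrable_finset_sum _ fun α _ => hint1 r α]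
    refine Finset.sum_congr rfl fun r _ => ?_
    rw [integral_finset_sum _ fun α _ => hint1 r α, Finset.sum_filter]
    refine Finset.sum_congr rfl fun α hα => ?_
    rw [integral_const_mul, aux_pi_integral]
    have h5 : ∏ j : {i // ¬ i ∈ S}, ∫ t, (I r ↑j).indicator (φ r ↑j (α ↑j)) t ∂ν ↑j
        = ∏ j : {i // ¬ i ∈ S}, (if α ↑j = 0 then (ν ↑j (I r ↑j)).toReal else 0) :=
      Finset.prod_congr rfl fun j _ => hψ1 r (α ↑j) ↑j
    rw [h5]
    by_cases hc : ∀ i ∉ S, α i = 0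
    · rw [if_pos hc]
      have h6 : ∏ j : {i // ¬ i ∈ S}, (if α ↑j = 0 then (ν ↑j (I r ↑j)).toReal else 0)
          = ∏ j : {i // ¬ i ∈ S}, (ν ↑j (I r ↑j)).toReal :=
        Finset.prod_congr rfl fun j _ => if_pos (hc ↑j j.2)
      rw [h6, show (∏ i ∈ Sᶜ, (ν i (I r i)).toReal)
          = ∏ j : {i // ¬ i ∈ S}, (ν ↑j (I r ↑j)).toReal from
        Finset.prod_subtype (p := fun i => ¬ i ∈ S) Sᶜ (fun i => Finset.mem_compl)
          (fun i => (ν i (I r i)).toReal)]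
    · rw [if_neg hc]
      push_neg at hc
      obtain ⟨i, hiS, hi0⟩ := hc
      have h7 : (∏ j : {i // ¬ i ∈ S}, if α ↑j = 0 then (ν ↑j (I r ↑j)).toReal else 0) = 0 :=
        Finset.prod_eq_zero (Finset.mem_univ (⟨i, hiS⟩ : {i // ¬ i ∈ S})) (by rw [if_neg hi0])
      rw [h7, mul_zero]
  rw [← aux_variance_congr hae]
  -- expansion of the square
  have hH2 : ∀ x : Fin d → ℝ, tpH ν I 𝒜 φ y S x ^ 2
      = ∑ r, ∑ r', ∑ α ∈ (𝒜 r).filter (fun α => ∀ i ∉ S, α i = 0),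
          ∑ α' ∈ (𝒜 r').filter (fun α' => ∀ i ∉ S, α' i = 0),
            (y r α * y r' α' * ((∏ i ∈ Sᶜ, (ν i (I r i)).toReal)
              * ∏ i ∈ Sᶜ, (ν i (I r' i)).toReal))
              * ((∏ i ∈ S, (I r i).indicator (φ r i (α i)) (x i))
                * ∏ i ∈ S, (I r' i).indicator (φ r' i (α' i)) (x i)) := by
    intro x
    rw [sq]
    unfold tpH
    rw [Finset.sum_mul_sum]
    refine Finset.sum_congr rfl fun r _ => Finset.sum_congr rfl fun r' _ => ?_
    rw [Finset.sum_mul_sum]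
    refine Finset.sum_congr rfl fun α _ => Finset.sum_congr rfl fun α' _ => ?_
    ring
  have hint2 : ∀ (r r' : Fin R) (α α' : Fin d → ℕ), Integrable (fun x : Fin d → ℝ =>
      (y r α * y r' α' * ((∏ i ∈ Sᶜ, (ν i (I r i)).toReal)
        * ∏ i ∈ Sᶜ, (ν i (I r' i)).toReal))
        * ((∏ i ∈ S, (I r i).indicator (φ r i (α i)) (x i))
          * ∏ i ∈ S, (I r' i).indicator (φ r' i (α' i)) (x i))) (Measure.pi ν) :=
    fun r r' α α' => (hHpair_int r r' α α').const_mul _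
  have hsqint : Integrable (fun x => tpH ν I 𝒜 φ y S x ^ 2) (Measure.pi ν) := by
    rw [show (fun x => tpH ν I 𝒜 φ y S x ^ 2) = _ from funext hH2]
    exact integrable_finset_sum _ fun r _ => integrable_finset_sum _ fun r' _ =>
      integrable_finset_sum _ fun α _ => integrable_finset_sum _ fun α' _ => hint2 r r' α α'
  have hmem2 : MemLp (tpH ν I 𝒜 φ y S) 2 (Measure.pi ν) :=
    (memLp_two_iff_integrable_sq (hHmeasS.mono hmle le_rfl).aestronglyMeasurable).mpr hsqint
  rw [variance_eq_sub hmem2]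
  -- the mean of tpH
  have hEH : ∫ x, tpH ν I 𝒜 φ y S x ∂Measure.pi ν
      = ∑ r, y r 0 * (Measure.pi ν (Set.univ.pi (I r))).toReal := by
    unfold tpH
    rw [integral_finset_sum _ fun r _ => integrable_finset_sum _ fun α _ =>
      ((hprodS_int _ fun i => hψint r (α i) i).const_mul (y r α)).mul_const _]
    refine Finset.sum_congr rfl fun r _ => ?_
    rw [integral_finset_sum _ fun α _ =>
      ((hprodS_int _ fun i => hψint r (α i) i).const_mul (y r α)).mul_const _]
    have hterm : ∀ α ∈ (𝒜 r).filter (fun α => ∀ i ∉ S, α i = 0),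
        ∫ x, y r α * (∏ i ∈ S, (I r i).indicator (φ r i (α i)) (x i))
          * ∏ i ∈ Sᶜ, (ν i (I r i)).toReal ∂Measure.pi ν
        = if α = 0 then y r 0 * (Measure.pi ν (Set.univ.pi (I r))).toReal else 0 := by
      intro α hα
      rw [integral_mul_const, integral_const_mul, hHterm_val r α]
      by_cases h0 : α = 0
      · subst h0
        rw [if_pos rfl]
        have h1 : ∏ i ∈ S, (if (0 : Fin d → ℕ) i = 0 then (ν i (I r i)).toReal else 0)
            = ∏ i ∈ S, (ν i (I r i)).toReal :=
          Finset.prod_congr rfl fun i _ => if_pos rfl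
        rw [h1, Measure.pi_pi, ENNReal.toReal_prod,
          ← Finset.prod_mul_prod_compl S (fun i => (ν i (I r i)).toReal)]
        ring
      · rw [if_neg h0]
        have h2 : ∃ i ∈ S, α i ≠ 0 := by
          by_contra hc
          push_neg at hc
          apply h0
          funext i
          by_cases hi : i ∈ S
          · exact hc i hi
          · exact (Finset.mem_filter.mp hα).2 i hi
        obtain ⟨i, hiS, hi0⟩ := h2
        have h3 : ∏ i ∈ S, (if α i = 0 then (ν i (I r i)).toReal else 0) = 0 :=
          Finset.prod_eq_zero hiS (by rw [if_neg hi0])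
        rw [h3, mul_zero, zero_mul]
    rw [Finset.sum_congr rfl hterm, Finset.sum_ite_eq' ((𝒜 r).filter (fun α => ∀ i ∉ S, α i = 0))
      (0 : Fin d → ℕ) (fun _ => y r 0 * (Measure.pi ν (Set.univ.pi (I r))).toReal)]
    by_cases h0 : (0 : Fin d → ℕ) ∈ (𝒜 r).filter (fun α => ∀ i ∉ S, α i = 0)
    · rw [if_pos h0]
    · rw [if_neg h0]
      have h4 : 0 ∉ 𝒜 r := fun hmem => h0 (Finset.mem_filter.mpr ⟨hmem, fun i _ => rfl⟩)
      rw [hy0 r h4, zero_mul]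
  -- the second moment of tpH
  have hEH2 : ∫ x, tpH ν I 𝒜 φ y S x ^ 2 ∂Measure.pi ν
      = ∑ r, ∑ r',
          (∑ α ∈ (𝒜 r).filter (fun α => ∀ i ∉ S, α i = 0),
            ∑ α' ∈ (𝒜 r').filter (fun α' => ∀ i ∉ S, α' i = 0),
              y r α * y r' α' * ∏ i ∈ S, J i r r' (α i) (α' i))
          * (∏ i ∈ Sᶜ, (ν i (I r i)).toReal)
          * (∏ i ∈ Sᶜ, (ν i (I r' i)).toReal) := by
    simp_rw [hH2]
    rw [integral_finset_sum _ fun r _ => integrable_finset_sum _ fun r' _ =>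
      integrable_finset_sum _ fun α _ => integrable_finset_sum _ fun α' _ => hint2 r r' α α']
    simp only [Finset.sum_mul]
    refine Finset.sum_congr rfl fun r _ => ?_
    rw [integral_finset_sum _ fun r' _ =>
      integrable_finset_sum _ fun α _ => integrable_finset_sum _ fun α' _ => hint2 r r' α α']
    refine Finset.sum_congr rfl fun r' _ => ?_
    rw [integral_finset_sum _ fun α _ => integrable_finset_sum _ fun α' _ => hint2 r r' α α']
    refine Finset.sum_congr rfl fun α _ => ?_
    rw [integral_finset_sum _ fun α' _ => hint2 r r' α α']
    refine Finset.sum_congr rfl fun α' _ => ?_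
    rw [integral_const_mul, hHpair_val r r' α α']
    ring
  calc (Measure.pi ν)[tpH ν I 𝒜 φ y S ^ 2] - (Measure.pi ν)[tpH ν I 𝒜 φ y S] ^ 2
      = (∫ x, tpH ν I 𝒜 φ y S x ^ 2 ∂Measure.pi ν)
        - (∫ x, tpH ν I 𝒜 φ y S x ∂Measure.pi ν) ^ 2 := rfl
    _ = _ := by rw [hEH2, hEH]
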